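/- Let f : {-1,1}^n → [-1,1] be a function of degree at most d as a multilinear polynomial. Then for every point x in {-1,1}^n, the sum over i of |f(x) - f(x ⊕ e_i)|/2 is at most d^2. In particular, the total L1 influence of f, defined as the sum over i of E_x[|f(x) - f(x ⊕ e_i)|/2], is at most d^2. -/

import Mathlib

open Finset

/-- The Fourier character χ_S evaluated at a point of the Boolean cube
(coordinates encoded by `Bool`, with `true ↦ 1` and `false ↦ -1`). -/
noncomputable def char {n : ℕ} (S : Finset (Fin n)) (x : Fin n → Bool) : ℝ :=
  ∏ i ∈ S, (if x i then (1 : ℝ) else -1)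

/-- The multilinear polynomial with Fourier coefficients `c`, evaluated on the cube. -/
noncomputable def eval' {n : ℕ} (c : Finset (Fin n) → ℝ) (x : Fin n → Bool) : ℝ :=
  ∑ S : Finset (Fin n), c S * char S x

/-- Flip the i-th coordinate. -/
def flipAt {n : ℕ} (x : Fin n → Bool) (i : Fin n) : Fin n → Bool :=
  Function.update x i (!(x i))

/-- Expectation over the uniform measure on the cube. -/
noncomputable def Ex {n : ℕ} (g : (Fin n → Bool) → ℝ) : ℝ :=
  (∑ x : Fin n → Bool, g x) / 2 ^ n

namespace InfAux

open Polynomial Real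


lemma U_eval_one_aux : ∀ k : ℕ, ((Polynomial.Chebyshev.U ℝ (k:ℤ)).eval 1 = (k:ℝ) + 1) ∧
    ((Polynomial.Chebyshev.U ℝ ((k:ℤ)+1)).eval 1 = (k:ℝ) + 2) := by
  intro k
  induction k with
  | zero => constructor <;> simp [Polynomial.Chebyshev.U_zero, Polynomial.Chebyshev.U_one]
  | succ m ih =>
    obtain ⟨h1, h2⟩ := ih
    have e1 : ((m:ℤ)+1 : ℤ) = ((m+1 : ℕ) : ℤ) := by push_cast; ring
    constructor
    · rw [← e1, h2]; push_cast; ring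
    · have := Polynomial.Chebyshev.U_add_two ℝ (m:ℤ)
      have heval : (Polynomial.Chebyshev.U ℝ ((m:ℤ)+2)).eval 1
          = 2 * 1 * (Polynomial.Chebyshev.U ℝ ((m:ℤ)+1)).eval 1
            - (Polynomial.Chebyshev.U ℝ (m:ℤ)).eval 1 := by
        rw [this]; simp
      have e2 : ((m+1:ℕ):ℤ) + 1 = (m:ℤ) + 2 := by push_cast; ring
      rw [e2, heval, h1, h2]; push_cast; ring

lemma U_eval_one (k : ℕ) : (Polynomial.Chebyshev.U ℝ (k:ℤ)).eval 1 = (k:ℝ) + 1 :=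
  (U_eval_one_aux k).1

lemma U_natDegree_le_aux : ∀ k : ℕ, ((Polynomial.Chebyshev.U ℝ (k:ℤ)).natDegree ≤ k) ∧
    ((Polynomial.Chebyshev.U ℝ ((k:ℤ)+1)).natDegree ≤ k + 1) := by
  intro k
  induction k with
  | zero =>
    constructor
    · simp [Polynomial.Chebyshev.U_zero]
    · rw [show ((0:ℕ):ℤ) + 1 = (1:ℤ) by norm_num, Polynomial.Chebyshev.U_one]
      refine le_trans Polynomial.natDegree_mul_le ?_
      simp [Polynomial.natDegree_X_le]
  | succ m ih =>
    obtain ⟨h1, h2⟩ := ih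
    have e1 : ((m:ℤ)+1 : ℤ) = ((m+1 : ℕ) : ℤ) := by push_cast; ring
    constructor
    · rw [← e1]; exact h2
    · have e2 : ((m+1:ℕ):ℤ) + 1 = (m:ℤ) + 2 := by push_cast; ring
      rw [e2, Polynomial.Chebyshev.U_add_two]
      refine le_trans (Polynomial.natDegree_sub_le _ _) ?_
      refine max_le ?_ (le_trans h1 (by omega))
      refine le_trans Polynomial.natDegree_mul_le ?_
      have : ((2 * X : ℝ[X])).natDegree ≤ 1 := by
        refine le_trans Polynomial.natDegree_mul_le ?_
        simp [Polynomial.natDegree_X_le]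
      omega

lemma U_natDegree_le (k : ℕ) : (Polynomial.Chebyshev.U ℝ (k:ℤ)).natDegree ≤ k :=
  (U_natDegree_le_aux k).1

lemma ivt_sign {f : ℝ → ℝ} (hf : Continuous f) {a b : ℝ} (hab : a < b)
    (h : f a * f b < 0) : ∃ r ∈ Set.Ioo a b, f r = 0 := by
  rcases mul_neg_iff.mp h with ⟨ha, hb⟩ | ⟨ha, hb⟩
  · have : (0:ℝ) ∈ Set.Ioo (f b) (f a) := ⟨hb, ha⟩
    have himg := intermediate_value_Ioo' (le_of_lt hab) hf.continuousOn this
    obtain ⟨r, hr, hfr⟩ := himg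
    exact ⟨r, hr, hfr⟩
  · have : (0:ℝ) ∈ Set.Ioo (f a) (f b) := ⟨ha, hb⟩
    have himg := intermediate_value_Ioo (le_of_lt hab) hf.continuousOn this
    obtain ⟨r, hr, hfr⟩ := himg
    exact ⟨r, hr, hfr⟩



lemma keyL_onesided {d : ℕ} (hd : 1 ≤ d) (h : ℝ[X]) (hh : h.natDegree < d) {M : ℝ}
    (hM : ∀ θ : ℝ, |Real.sin θ * h.eval (Real.cos θ)| ≤ M) :
    h.eval 1 ≤ (d:ℝ) * M := by
  by_contra hcon
  push_neg at hcon
  have hM0 : 0 ≤ M := le_trans (abs_nonneg _) (hM 0)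
  have hdpos : (0:ℝ) < d := by exact_mod_cast hd
  have hc0 : 0 < h.eval 1 := lt_of_le_of_lt (by positivity) hcon
  set q : ℝ[X] := Polynomial.C (h.eval 1) * Polynomial.Chebyshev.U ℝ ((d:ℤ)-1)
      - Polynomial.C (d:ℝ) * h with hq
  have hUidx : (((d-1:ℕ)):ℤ) = (d:ℤ)-1 := by omega
  have hqdeg : q.natDegree < d := by
    have h1 : (Polynomial.C (h.eval 1) * Polynomial.Chebyshev.U ℝ ((d:ℤ)-1)).natDegree ≤ d-1 := by
      refine le_trans (Polynomial.natDegree_C_mul_le _ _) ?_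
      rw [← hUidx]; exact U_natDegree_le (d-1)
    have h2 : (Polynomial.C (d:ℝ) * h).natDegree ≤ d-1 := by
      refine le_trans (Polynomial.natDegree_C_mul_le _ _) ?_; omega
    have h3 := Polynomial.natDegree_sub_le (Polynomial.C (h.eval 1) * Polynomial.Chebyshev.U ℝ ((d:ℤ)-1))
      (Polynomial.C (d:ℝ) * h)
    rw [← hq] at h3
    omega
  have hq1 : q.eval 1 = 0 := by
    rw [hq]
    simp only [Polynomial.eval_sub, Polynomial.eval_mul, Polynomial.eval_C]
    rw [← hUidx, U_eval_one (d-1)]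
    have : ((d-1:ℕ):ℝ) = (d:ℝ) - 1 := by
      have : (1:ℕ) ≤ d := hd
      push_cast [this]; ring
    rw [this]; ring
  set θf : ℕ → ℝ := fun k => (2*k+1) * π / (2*d) with hθf
  have hθpos : ∀ k : ℕ, 0 < θf k := by
    intro k
    apply div_pos
    · positivity
    · positivity
  have hθlt : ∀ k : ℕ, k < d → θf k < π := by
    intro k hk
    rw [hθf]
    rw [div_lt_iff₀ (by positivity)]
    have : (2*(k:ℝ)+1) < 2*d := by
      have : (k:ℝ) + 1 ≤ d := by exact_mod_cast hk
      linarith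
    nlinarith [Real.pi_pos]
  have hθmono : ∀ a b : ℕ, a < b → θf a < θf b := by
    intro a b hab
    rw [hθf]
    have hab' : (a:ℝ) < b := by exact_mod_cast hab
    have h2d : (0:ℝ) < 2*d := by positivity
    have hnum : (2*(a:ℝ)+1) * π < (2*(b:ℝ)+1)*π := by nlinarith [Real.pi_pos]
    exact div_lt_div_of_pos_right hnum h2d
  have hsind : ∀ k : ℕ, (d:ℝ) * θf k = (k:ℝ)*π + π/2 := by
    intro k
    have hdne : (d:ℝ) ≠ 0 := ne_of_gt hdpos
    rw [hθf]
    field_simp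
  have hsink : ∀ k : ℕ, Real.sin ((d:ℝ) * θf k) = (-1:ℝ)^k := by
    intro k
    rw [hsind k, Real.sin_add_pi_div_two]
    have := Real.cos_nat_mul_pi_sub 0 k
    simpa using this
  -- key node inequality
  set μ : ℕ → ℝ := fun k => Real.cos (θf k) with hμ
  have hμmono : ∀ a b : ℕ, a < b → b < d → μ b < μ a := by
    intro a b hab hbd
    apply Real.strictAntiOn_cos
    · constructor
      · exact le_of_lt (hθpos a)
      · exact le_of_lt (lt_trans (hθmono a b hab) (hθlt b hbd))
    · exact ⟨le_of_lt (hθpos b), le_of_lt (hθlt b hbd)⟩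
    · exact hθmono a b hab
  have hμlt1 : ∀ k : ℕ, k < d → μ k < 1 := by
    intro k hk
    have : Real.cos (θf k) < Real.cos 0 := by
      apply Real.strictAntiOn_cos
      · exact ⟨le_refl 0, le_of_lt Real.pi_pos⟩
      · exact ⟨le_of_lt (hθpos k), le_of_lt (hθlt k hk)⟩
      · exact hθpos k
    simpa using this
  have hqnode : ∀ k : ℕ, k < d → 0 < (-1:ℝ)^k * q.eval (μ k) := by
    intro k hk
    have hsin : 0 < Real.sin (θf k) := Real.sin_pos_of_pos_of_lt_pi (hθpos k) (hθlt k hk)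
    have hU := Polynomial.Chebyshev.U_real_cos (θf k) ((d:ℤ)-1)
    have hUe : (Polynomial.Chebyshev.U ℝ ((d:ℤ)-1)).eval (Real.cos (θf k)) * Real.sin (θf k)
        = (-1:ℝ)^k := by
      rw [hU]
      have : ((((d:ℤ)-1 : ℤ)):ℝ) + 1 = (d:ℝ) := by push_cast; ring
      rw [this, hsink k]
    have hqe : q.eval (μ k) * Real.sin (θf k)
        = h.eval 1 * (-1:ℝ)^k - (d:ℝ) * (Real.sin (θf k) * h.eval (μ k)) := by
      rw [hq]
      simp only [Polynomial.eval_sub, Polynomial.eval_mul, Polynomial.eval_C]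
      rw [hμ]
      simp only []
      rw [sub_mul]
      rw [mul_assoc, hUe]
      ring
    set t := Real.sin (θf k) * h.eval (μ k) with ht
    have habs : |t| ≤ M := hM (θf k)
    have hle : (-1:ℝ)^k * t ≤ M := by
      calc (-1:ℝ)^k * t ≤ |(-1:ℝ)^k * t| := le_abs_self _
        _ = |t| := by rw [abs_mul, abs_pow, abs_neg, abs_one, one_pow, one_mul]
        _ ≤ M := habs
    have hprod : 0 < ((-1:ℝ)^k * q.eval (μ k)) * Real.sin (θf k) := by
      have : ((-1:ℝ)^k * q.eval (μ k)) * Real.sin (θf k)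
          = (-1:ℝ)^k * (q.eval (μ k) * Real.sin (θf k)) := by ring
      rw [this, hqe]
      have hsq : (-1:ℝ)^k * ((-1:ℝ)^k) = 1 := by
        rw [← mul_pow]
        norm_num
      have expand : (-1:ℝ)^k * (h.eval 1 * (-1:ℝ)^k - (d:ℝ) * t)
          = h.eval 1 - (d:ℝ) * ((-1:ℝ)^k * t) := by
        have : (-1:ℝ)^k * (h.eval 1 * (-1:ℝ)^k) = h.eval 1 := by
          calc (-1:ℝ)^k * (h.eval 1 * (-1:ℝ)^k) = h.eval 1 * ((-1:ℝ)^k * ((-1:ℝ)^k)) := by ring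
            _ = h.eval 1 := by rw [hsq]; ring
        rw [mul_sub, this]; ring
      rw [expand]
      have : (d:ℝ) * ((-1:ℝ)^k * t) ≤ (d:ℝ) * M := by
        apply mul_le_mul_of_nonneg_left hle (le_of_lt hdpos)
      linarith
    by_contra hX
    push_neg at hX
    exact absurd hprod (not_lt.mpr (mul_nonpos_of_nonpos_of_nonneg hX (le_of_lt hsin)))
  have hcont : Continuous fun x : ℝ => q.eval x := q.continuous
  have hroots : ∀ k : ℕ, k + 1 < d → ∃ r ∈ Set.Ioo (μ (k+1)) (μ k), q.eval r = 0 := by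
    intro k hk
    apply ivt_sign hcont (hμmono k (k+1) (by omega) hk)
    have h1 := hqnode k (by omega)
    have h2 := hqnode (k+1) hk
    have hm : ((-1:ℝ)^k) * ((-1:ℝ)^(k+1)) = -1 := by
      rw [← pow_add]
      exact Odd.neg_one_pow ⟨k, by omega⟩
    have hmp := mul_pos h1 h2
    have hre : ((-1:ℝ)^k * q.eval (μ k)) * ((-1:ℝ)^(k+1) * q.eval (μ (k+1)))
        = (((-1:ℝ)^k) * ((-1:ℝ)^(k+1))) * (q.eval (μ k) * q.eval (μ (k+1))) := by ring
    rw [hre, hm] at hmp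
    nlinarith [hmp]
  choose rt hrtmem hrtval using hroots
  set ρ : Fin d → ℝ := fun j => dite ((j:ℕ) = 0) (fun _ => (1:ℝ))
      (fun h0 => rt ((j:ℕ)-1) (by have := j.isLt; omega)) with hρ
  have hρ0 : ∀ j : Fin d, (j:ℕ) = 0 → ρ j = 1 := by
    intro j hj; rw [hρ]; simp only [hj]; rfl
  have hρmem : ∀ j : Fin d, (hj : (j:ℕ) ≠ 0) → ρ j ∈ Set.Ioo (μ (j:ℕ)) (μ ((j:ℕ)-1)) := by
    intro j hj
    have hlt : (j:ℕ) - 1 + 1 < d := by have := j.isLt; omega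
    have := hrtmem ((j:ℕ)-1) hlt
    have hco : (j:ℕ) - 1 + 1 = (j:ℕ) := by omega
    rw [hco] at this
    rw [hρ]
    simpa [hj] using this
  have hρeval : ∀ j : Fin d, q.eval (ρ j) = 0 := by
    intro j
    by_cases hj : (j:ℕ) = 0
    · rw [hρ0 j hj]; exact hq1
    · have hlt : (j:ℕ) - 1 + 1 < d := by have := j.isLt; omega
      have := hrtval ((j:ℕ)-1) hlt
      rw [hρ]
      simpa [hj] using this
  have hanti : ∀ i j : Fin d, i < j → ρ j < ρ i := by
    intro i j hij
    have hjne : (j:ℕ) ≠ 0 := by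
      have : (i:ℕ) < (j:ℕ) := hij
      omega
    have hjmem := hρmem j hjne
    have hjd : (j:ℕ) - 1 < d := by have := j.isLt; omega
    by_cases hi : (i:ℕ) = 0
    · rw [hρ0 i hi]
      exact lt_trans hjmem.2 (hμlt1 ((j:ℕ)-1) hjd)
    · have himem := hρmem i hi
      have hile : (i:ℕ) ≤ (j:ℕ) - 1 := by
        have : (i:ℕ) < (j:ℕ) := hij
        omega
      rcases eq_or_lt_of_le hile with heq | hlt
      · rw [← heq] at hjmem
        exact lt_trans hjmem.2 himem.1
      · have := hμmono (i:ℕ) ((j:ℕ)-1) hlt hjd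
        exact lt_trans hjmem.2 (lt_trans this himem.1)
  have hinj : Function.Injective ρ := by
    intro i j hije
    rcases lt_trichotomy i j with hlt | heq | hgt
    · exact absurd hije (ne_of_gt (hanti i j hlt))
    · exact heq
    · exact absurd hije (ne_of_lt (hanti j i hgt))
  have hq0 : q = 0 := by
    apply Polynomial.eq_zero_of_natDegree_lt_card_of_eval_eq_zero q hinj hρeval
    rwa [Fintype.card_fin]
  have := hqnode 0 (by omega)
  rw [hq0] at this
  simp at this

lemma keyL {d : ℕ} (hd : 1 ≤ d) (h : ℝ[X]) (hh : h.natDegree < d) {M : ℝ}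
    (hM : ∀ θ : ℝ, |Real.sin θ * h.eval (Real.cos θ)| ≤ M) :
    |h.eval 1| ≤ (d:ℝ) * M := by
  rw [abs_le]
  constructor
  · have := keyL_onesided hd (-h) (by simpa using hh) (M := M) (fun θ => by
      rw [show Real.sin θ * Polynomial.eval (Real.cos θ) (-h) = -(Real.sin θ * h.eval (Real.cos θ)) by simp, abs_neg]
      exact hM θ)
    simp only [Polynomial.eval_neg] at this
    linarith
  · exact keyL_onesided hd h hh hM





/-- φ is a trigonometric polynomial of degree ≤ d, written via even/odd parts. -/
def IsTrig (d : ℕ) (φ : ℝ → ℝ) : Prop :=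
  ∃ E O : ℝ[X], E.natDegree ≤ d ∧ (O = 0 ∨ O.natDegree + 1 ≤ d) ∧
    ∀ θ : ℝ, φ θ = E.eval (Real.cos θ) + Real.sin θ * O.eval (Real.cos θ)

lemma isTrig_mono {d₁ d₂ : ℕ} {φ : ℝ → ℝ} (h : IsTrig d₁ φ) (hle : d₁ ≤ d₂) : IsTrig d₂ φ := by
  obtain ⟨E, O, hE, hO, hrep⟩ := h
  exact ⟨E, O, le_trans hE hle, by rcases hO with h | h; exact Or.inl h; exact Or.inr (le_trans h hle), hrep⟩

lemma isTrig_const (d : ℕ) (a : ℝ) : IsTrig d (fun _ => a) := by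
  refine ⟨Polynomial.C a, 0, ?_, Or.inl rfl, ?_⟩
  · simp
  · intro θ; simp

lemma isTrig_cos_add (α : ℝ) : IsTrig 1 (fun θ => Real.cos (α + θ)) := by
  refine ⟨Polynomial.C (Real.cos α) * Polynomial.X, Polynomial.C (-(Real.sin α)), ?_, ?_, ?_⟩
  · refine le_trans (Polynomial.natDegree_C_mul_le _ _) ?_
    simp [Polynomial.natDegree_X]
  · right; simp
  · intro θ
    simp only [Polynomial.eval_mul, Polynomial.eval_C, Polynomial.eval_X]
    rw [Real.cos_add]; ring

lemma isTrig_cos_sub (α : ℝ) : IsTrig 1 (fun θ => Real.cos (α - θ)) := by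
  refine ⟨Polynomial.C (Real.cos α) * Polynomial.X, Polynomial.C (Real.sin α), ?_, ?_, ?_⟩
  · refine le_trans (Polynomial.natDegree_C_mul_le _ _) ?_
    simp [Polynomial.natDegree_X]
  · right; simp
  · intro θ
    simp only [Polynomial.eval_mul, Polynomial.eval_C, Polynomial.eval_X]
    rw [Real.cos_sub]; ring

lemma isTrig_mul {d₁ d₂ : ℕ} {φ₁ φ₂ : ℝ → ℝ} (h₁ : IsTrig d₁ φ₁) (h₂ : IsTrig d₂ φ₂) :
    IsTrig (d₁ + d₂) (fun θ => φ₁ θ * φ₂ θ) := by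
  obtain ⟨E₁, O₁, hE₁, hO₁, hr₁⟩ := h₁
  obtain ⟨E₂, O₂, hE₂, hO₂, hr₂⟩ := h₂
  refine ⟨E₁ * E₂ + (1 - Polynomial.X ^ 2) * (O₁ * O₂), E₁ * O₂ + O₁ * E₂, ?_, ?_, ?_⟩
  · refine le_trans (Polynomial.natDegree_add_le _ _) (max_le ?_ ?_)
    · exact le_trans (Polynomial.natDegree_mul_le) (by omega)
    · have hX : ((1 : ℝ[X]) - Polynomial.X ^ 2).natDegree ≤ 2 := by
        refine le_trans (Polynomial.natDegree_sub_le _ _) ?_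
        simp [Polynomial.natDegree_X_pow]
      rcases hO₁ with rfl | hO₁
      · simp
      rcases hO₂ with rfl | hO₂
      · simp
      refine le_trans (Polynomial.natDegree_mul_le) ?_
      have := Polynomial.natDegree_mul_le (p := O₁) (q := O₂)
      omega
  · rcases hO₁ with rfl | hO₁
    · rcases hO₂ with rfl | hO₂
      · left; simp
      · by_cases hE₁0 : E₁ = 0
        · left; simp [hE₁0]
        right
        simp only [zero_mul, add_zero]
        have := Polynomial.natDegree_mul_le (p := E₁) (q := O₂)
        omega
    · rcases hO₂ with rfl | hO₂
      · by_cases hE₂0 : E₂ = 0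
        · left; simp [hE₂0]
        right
        simp only [mul_zero, zero_add]
        have := Polynomial.natDegree_mul_le (p := O₁) (q := E₂)
        omega
      · right
        refine le_trans (by have := Polynomial.natDegree_add_le (E₁ * O₂) (O₁ * E₂); omega : (E₁ * O₂ + O₁ * E₂).natDegree + 1 ≤ max ((E₁*O₂).natDegree) ((O₁*E₂).natDegree) + 1) ?_
        have hA := Polynomial.natDegree_mul_le (p := E₁) (q := O₂)
        have hB := Polynomial.natDegree_mul_le (p := O₁) (q := E₂)
        omega
  · intro θ
    have s2 : Real.sin θ ^ 2 = 1 - Real.cos θ ^ 2 := by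
      have := Real.sin_sq_add_cos_sq θ
      linarith
    show φ₁ θ * φ₂ θ = _
    rw [hr₁ θ, hr₂ θ]
    simp only [Polynomial.eval_add, Polynomial.eval_mul, Polynomial.eval_sub,
      Polynomial.eval_one, Polynomial.eval_pow, Polynomial.eval_X]
    linear_combination (Polynomial.eval (Real.cos θ) O₁ * Polynomial.eval (Real.cos θ) O₂) * s2

lemma isTrig_pow {φ : ℝ → ℝ} (h : IsTrig 1 φ) (p : ℕ) : IsTrig p (fun θ => (φ θ) ^ p) := by
  induction p with
  | zero => simpa using isTrig_const 0 1
  | succ m ih =>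
    have := isTrig_mul ih h
    have heq : (fun θ => (φ θ) ^ (m+1)) = (fun θ => (φ θ) ^ m * φ θ) := by
      funext θ; rw [pow_succ]
    rw [heq]
    exact this

lemma isTrig_sum {d : ℕ} {ι : Type*} (s : Finset ι) (g : ι → ℝ → ℝ)
    (h : ∀ i ∈ s, IsTrig d (g i)) : IsTrig d (fun θ => ∑ i ∈ s, g i θ) := by
  classical
  induction s using Finset.induction_on with
  | empty => simpa using isTrig_const d 0
  | insert a s' hnotmem ih =>
    have ha := h a (Finset.mem_insert_self a s')
    have hs := ih (fun i hi => h i (Finset.mem_insert_of_mem hi))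
    obtain ⟨E₁, O₁, hE₁, hO₁, hr₁⟩ := ha
    obtain ⟨E₂, O₂, hE₂, hO₂, hr₂⟩ := hs
    refine ⟨E₁ + E₂, O₁ + O₂, ?_, ?_, ?_⟩
    · exact le_trans (Polynomial.natDegree_add_le _ _) (max_le hE₁ hE₂)
    · rcases hO₁ with rfl | h1
      · rcases hO₂ with rfl | h2
        · left; simp
        · right; simpa using h2
      · rcases hO₂ with rfl | h2
        · right; simpa using h1
        · right
          have := Polynomial.natDegree_add_le O₁ O₂
          omega
    · intro θ
      show ∑ i ∈ insert a s', g i θ = _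
      have h2' : (∑ i ∈ s', g i θ) = Polynomial.eval (Real.cos θ) E₂
          + Real.sin θ * Polynomial.eval (Real.cos θ) O₂ := hr₂ θ
      rw [Finset.sum_insert hnotmem, hr₁ θ, h2']
      simp only [Polynomial.eval_add]
      ring

lemma isTrig_deriv_bound {d : ℕ} {φ : ℝ → ℝ} {D : ℝ} (h : IsTrig d φ)
    (hb : ∀ θ, |φ θ| ≤ 1) (hD : HasDerivAt φ D 0) : |D| ≤ (d : ℝ) := by
  obtain ⟨E, O, hE, hO, hrep⟩ := h
  -- derivative of the representation at 0
  have hEd : HasDerivAt (fun θ : ℝ => E.eval (Real.cos θ))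
      (E.derivative.eval (Real.cos 0) * (-Real.sin 0)) 0 :=
    (E.hasDerivAt (Real.cos 0)).comp 0 (Real.hasDerivAt_cos 0)
  have hOd : HasDerivAt (fun θ : ℝ => O.eval (Real.cos θ))
      (O.derivative.eval (Real.cos 0) * (-Real.sin 0)) 0 :=
    (O.hasDerivAt (Real.cos 0)).comp 0 (Real.hasDerivAt_cos 0)
  have hSd : HasDerivAt (fun θ : ℝ => Real.sin θ * O.eval (Real.cos θ))
      (Real.cos 0 * O.eval (Real.cos 0)
        + Real.sin 0 * (O.derivative.eval (Real.cos 0) * (-Real.sin 0))) 0 :=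
    (Real.hasDerivAt_sin 0).mul hOd
  have hrepd : HasDerivAt φ (E.derivative.eval (Real.cos 0) * (-Real.sin 0)
      + (Real.cos 0 * O.eval (Real.cos 0)
        + Real.sin 0 * (O.derivative.eval (Real.cos 0) * (-Real.sin 0)))) 0 := by
    have := hEd.add hSd
    apply this.congr_of_eventuallyEq
    filter_upwards [] with θ
    rw [hrep θ]; rfl
  have hDval : D = O.eval 1 := by
    have := hD.unique hrepd
    simpa using this
  -- bound on the odd part
  have hodd : ∀ θ : ℝ, |Real.sin θ * O.eval (Real.cos θ)| ≤ 1 := by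
    intro θ
    have h1 := hb θ
    have h2 := hb (-θ)
    have hrθ := hrep θ
    have hrθ' := hrep (-θ)
    rw [Real.cos_neg, Real.sin_neg] at hrθ'
    have heq : Real.sin θ * O.eval (Real.cos θ) = (φ θ - φ (-θ)) / 2 := by
      rw [hrθ, hrθ']; ring
    rw [heq]
    rw [abs_div]
    rw [abs_of_pos (by norm_num : (0:ℝ) < 2)]
    have := abs_sub (φ θ) (φ (-θ))
    calc |φ θ - φ (-θ)| / 2 ≤ (|φ θ| + |φ (-θ)|) / 2 := by
          have := abs_sub_abs_le_abs_sub (φ θ) (φ (-θ))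
          have h3 : |φ θ - φ (-θ)| ≤ |φ θ| + |φ (-θ)| := abs_sub _ _
          linarith
      _ ≤ 1 := by linarith
  rcases hO with rfl | hO
  · rw [hDval]; simp
  · have hkey := keyL (by omega : 1 ≤ d) O (by omega) hodd
    rw [hDval]
    calc |O.eval 1| ≤ (d:ℝ) * 1 := hkey
      _ = (d:ℝ) := by ring



noncomputable def evalR {n : ℕ} (c : Finset (Fin n) → ℝ) (z : Fin n → ℝ) : ℝ :=
  ∑ S : Finset (Fin n), c S * ∏ i ∈ S, z i

noncomputable def toPM {n : ℕ} (x : Fin n → Bool) : Fin n → ℝ :=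
  fun i => if x i then (1:ℝ) else -1

lemma evalR_toPM {n : ℕ} (c : Finset (Fin n) → ℝ) (x : Fin n → Bool) :
    evalR c (toPM x) = eval' c x := by
  unfold evalR eval' char toPM
  rfl

lemma evalR_affine {n : ℕ} (c : Finset (Fin n) → ℝ) (z : Fin n → ℝ) (j : Fin n) :
    evalR c z = ((1 + z j)/2) * evalR c (Function.update z j 1)
      + ((1 - z j)/2) * evalR c (Function.update z j (-1)) := by
  unfold evalR
  rw [Finset.mul_sum, Finset.mul_sum, ← Finset.sum_add_distrib]
  apply Finset.sum_congr rfl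
  intro S _
  by_cases hj : j ∈ S
  · rw [Finset.prod_update_of_mem hj, Finset.prod_update_of_mem hj]
    have : ∏ i ∈ S, z i = z j * ∏ i ∈ S \ {j}, z i := by
      rw [← Finset.prod_eq_mul_prod_sdiff_singleton_of_mem hj]
    rw [this]
    ring
  · rw [Finset.prod_update_of_notMem hj, Finset.prod_update_of_notMem hj]
    ring

lemma evalR_bounded {n : ℕ} (c : Finset (Fin n) → ℝ)
    (hb : ∀ x : Fin n → Bool, |eval' c x| ≤ 1) :
    ∀ z : Fin n → ℝ, (∀ i, |z i| ≤ 1) → |evalR c z| ≤ 1 := by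
  classical
  suffices H : ∀ (A : Finset (Fin n)) (z : Fin n → ℝ), (∀ i, |z i| ≤ 1) →
      (∀ i, z i = 1 ∨ z i = -1 ∨ i ∈ A) → |evalR c z| ≤ 1 by
    intro z hz
    exact H Finset.univ z hz (fun i => Or.inr (Or.inr (Finset.mem_univ i)))
  intro A
  induction A using Finset.induction_on with
  | empty =>
    intro z hz hc
    set x : Fin n → Bool := fun i => if z i = 1 then true else false with hx
    have hzx : z = toPM x := by
      funext i
      rcases hc i with h | h | h
      · simp [toPM, hx, h]
      · have hne : ¬ (z i = 1) := by rw [h]; norm_num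
        simp only [toPM, hx, if_neg hne, Bool.if_false_right, Bool.and_true]
        rw [h]
        norm_num
      · exact absurd h (by simp)
    rw [hzx, evalR_toPM]
    exact hb x
  | insert a A' hnot ih =>
    intro z hz hc
    have h1 : |evalR c (Function.update z a 1)| ≤ 1 := by
      apply ih
      · intro i
        by_cases hia : i = a
        · subst hia; simp
        · rw [Function.update_of_ne hia]; exact hz i
      · intro i
        by_cases hia : i = a
        · subst hia; left; simp
        · rw [Function.update_of_ne hia]
          rcases hc i with h | h | h
          · exact Or.inl h
          · exact Or.inr (Or.inl h)
          · rcases Finset.mem_insert.mp h with h' | h'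
            · exact absurd h' hia
            · exact Or.inr (Or.inr h')
    have h2 : |evalR c (Function.update z a (-1))| ≤ 1 := by
      apply ih
      · intro i
        by_cases hia : i = a
        · subst hia; simp
        · rw [Function.update_of_ne hia]; exact hz i
      · intro i
        by_cases hia : i = a
        · subst hia; right; left; simp
        · rw [Function.update_of_ne hia]
          rcases hc i with h | h | h
          · exact Or.inl h
          · exact Or.inr (Or.inl h)
          · rcases Finset.mem_insert.mp h with h' | h'
            · exact absurd h' hia
            · exact Or.inr (Or.inr h')
    rw [evalR_affine c z a]
    have hza := hz a
    have hw1 : (0:ℝ) ≤ (1 + z a)/2 := by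
      rw [abs_le] at hza; linarith
    have hw2 : (0:ℝ) ≤ (1 - z a)/2 := by
      rw [abs_le] at hza; linarith
    calc |(1 + z a)/2 * evalR c (Function.update z a 1)
          + (1 - z a)/2 * evalR c (Function.update z a (-1))|
        ≤ |(1 + z a)/2 * evalR c (Function.update z a 1)|
          + |(1 - z a)/2 * evalR c (Function.update z a (-1))| := abs_add_le _ _
      _ ≤ (1 + z a)/2 * 1 + (1 - z a)/2 * 1 := by
          rw [abs_mul, abs_mul, abs_of_nonneg hw1, abs_of_nonneg hw2]
          gcongr
      _ = 1 := by ring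



section Main

variable {n : ℕ} (c : Finset (Fin n) → ℝ) (x : Fin n → Bool)

/-- χ_S(x⊕e_i) = ± χ_S(x) -/
lemma char_flip (S : Finset (Fin n)) (i : Fin n) :
    char S (flipAt x i) = if i ∈ S then -char S x else char S x := by
  classical
  have hfun : (fun k => if flipAt x i k then (1:ℝ) else -1)
      = Function.update (fun k => if x k then (1:ℝ) else -1) i (if x i then (-1:ℝ) else 1) := by
    funext k
    by_cases hk : k = i
    · subst hk
      simp [flipAt, Function.update_self]
      cases hxk : x k <;> simp
    · simp [flipAt, Function.update_of_ne hk]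
  by_cases hi : i ∈ S
  · rw [if_pos hi]
    unfold char
    calc (∏ k ∈ S, if flipAt x i k then (1:ℝ) else -1)
        = ∏ k ∈ S, Function.update (fun k => if x k then (1:ℝ) else -1) i
            (if x i then (-1:ℝ) else 1) k := by rw [hfun]
      _ = (if x i then (-1:ℝ) else 1) * ∏ k ∈ S \ {i}, (if x k then (1:ℝ) else -1) := by
          rw [Finset.prod_update_of_mem hi]
      _ = -((if x i then (1:ℝ) else -1) * ∏ k ∈ S \ {i}, (if x k then (1:ℝ) else -1)) := by
          cases hxi : x i <;> simp
      _ = -∏ k ∈ S, (if x k then (1:ℝ) else -1) := by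
          have := Finset.prod_eq_mul_prod_sdiff_singleton_of_mem hi
            (fun k => if x k = true then (1:ℝ) else -1)
          rw [← this]
  · rw [if_neg hi]
    unfold char
    apply Finset.prod_congr rfl
    intro k hk
    have hki : k ≠ i := fun h => hi (h ▸ hk)
    simp [flipAt, Function.update_of_ne hki]

lemma abs_char (S : Finset (Fin n)) : |char S x| = 1 := by
  unfold char
  rw [Finset.abs_prod]
  apply Finset.prod_eq_one
  intro k _
  cases hxk : x k <;> simp

/-- the discrete derivative as a Fourier sum -/
lemma D_eq (i : Fin n) :
    (eval' c x - eval' c (flipAt x i)) / 2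
      = ∑ S ∈ Finset.univ.filter (fun S : Finset (Fin n) => i ∈ S), c S * char S x := by
  classical
  unfold eval'
  rw [← Finset.sum_sub_distrib]
  have hterm : ∀ S : Finset (Fin n),
      c S * char S x - c S * char S (flipAt x i)
        = if i ∈ S then 2 * (c S * char S x) else 0 := by
    intro S
    rw [char_flip]
    by_cases hi : i ∈ S
    · rw [if_pos hi, if_pos hi]; ring
    · rw [if_neg hi, if_neg hi]; ring
  rw [Finset.sum_congr rfl (fun S _ => hterm S)]
  rw [Finset.sum_filter]
  rw [Finset.sum_div]
  apply Finset.sum_congr rfl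
  intro S _
  by_cases hi : i ∈ S
  · rw [if_pos hi, if_pos hi]; ring
  · rw [if_neg hi, if_neg hi]; ring

end Main


end InfAux

open InfAux Polynomial Real in
theorem influence_L1_le_d_sq (n d : ℕ) (c : Finset (Fin n) → ℝ)
    (hdeg : ∀ S, c S ≠ 0 → S.card ≤ d)
    (hbd : ∀ x, |eval' c x| ≤ 1) :
    (∀ x, ∑ i : Fin n, |eval' c x - eval' c (flipAt x i)| / 2 ≤ (d : ℝ) ^ 2) ∧
    (∑ i : Fin n, Ex (fun x => |eval' c x - eval' c (flipAt x i)| / 2)) ≤ (d : ℝ) ^ 2 := by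
  classical
  have main : ∀ x, ∑ i : Fin n, |eval' c x - eval' c (flipAt x i)| / 2 ≤ (d : ℝ) ^ 2 := by
    intro x
    -- normalize the summand
    have habs : ∀ i : Fin n, |eval' c x - eval' c (flipAt x i)| / 2
        = |(eval' c x - eval' c (flipAt x i)) / 2| := by
      intro i
      rw [abs_div]
      norm_num
    set D : Fin n → ℝ := fun i => (eval' c x - eval' c (flipAt x i)) / 2 with hD
    have hgoal : ∑ i : Fin n, |eval' c x - eval' c (flipAt x i)| / 2 = ∑ i : Fin n, |D i| := by
      apply Finset.sum_congr rfl
      intro i _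
      rw [habs i]
    rw [hgoal]
    set ct : Finset (Fin n) → ℝ := fun S => c S * char S x with hct
    have hDs : ∀ i, D i = ∑ S ∈ Finset.univ.filter (fun S : Finset (Fin n) => i ∈ S), ct S := by
      intro i
      rw [hD]
      exact D_eq c x i
    set pS : Finset (Fin n) → ℕ := fun S => (S.filter (fun i => 0 ≤ D i)).card with hpS
    set nS : Finset (Fin n) → ℕ := fun S => (S.filter (fun i => ¬ 0 ≤ D i)).card with hnS
    have hpn : ∀ S : Finset (Fin n), pS S + nS S = S.card := by
      intro S
      exact Finset.card_filter_add_card_filter_not _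
    -- the sum identity
    have hsum : ∑ i : Fin n, |D i| = ∑ S : Finset (Fin n), ct S * ((pS S : ℝ) - (nS S : ℝ)) := by
      have step1 : ∀ i : Fin n, |D i| = (if 0 ≤ D i then (1:ℝ) else -1) * D i := by
        intro i
        by_cases h : 0 ≤ D i
        · rw [if_pos h, one_mul, abs_of_nonneg h]
        · rw [if_neg h, abs_of_neg (lt_of_not_ge h)]; ring
      calc ∑ i : Fin n, |D i|
          = ∑ i : Fin n, ∑ S ∈ Finset.univ.filter (fun S : Finset (Fin n) => i ∈ S),
              (if 0 ≤ D i then (1:ℝ) else -1) * ct S := by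
            apply Finset.sum_congr rfl
            intro i _
            rw [step1 i, hDs i, Finset.mul_sum]
        _ = ∑ i : Fin n, ∑ S : Finset (Fin n),
              (if i ∈ S then (if 0 ≤ D i then (1:ℝ) else -1) * ct S else 0) := by
            apply Finset.sum_congr rfl
            intro i _
            rw [Finset.sum_filter]
        _ = ∑ S : Finset (Fin n), ∑ i : Fin n,
              (if i ∈ S then (if 0 ≤ D i then (1:ℝ) else -1) * ct S else 0) := by
            exact Finset.sum_comm
        _ = ∑ S : Finset (Fin n), ct S * ((pS S : ℝ) - (nS S : ℝ)) := by
            apply Finset.sum_congr rfl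
            intro S _
            rw [← Finset.sum_filter]
            have hfil : Finset.univ.filter (fun i => i ∈ S) = S := by
              ext i; simp
            rw [hfil]
            have : ∀ i ∈ S, (if 0 ≤ D i then (1:ℝ) else -1) * ct S
                = (if 0 ≤ D i then ct S else - ct S) := by
              intro i _
              by_cases h : 0 ≤ D i
              · rw [if_pos h, if_pos h]; ring
              · rw [if_neg h, if_neg h]; ring
            rw [Finset.sum_congr rfl this]
            rw [Finset.sum_ite]
            rw [Finset.sum_const, Finset.sum_const]
            rw [nsmul_eq_mul, nsmul_eq_mul]
            ring
    rw [hsum]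
    rcases Nat.eq_zero_or_pos d with hd0 | hd1
    · -- degree 0 : everything vanishes
      subst hd0
      have hz : ∀ S : Finset (Fin n), ct S * ((pS S : ℝ) - (nS S : ℝ)) = 0 := by
        intro S
        rcases Finset.eq_empty_or_nonempty S with rfl | hne
        · simp [hpS, hnS]
        · have hc0 : c S = 0 := by
            by_contra hc
            have := hdeg S hc
            have : S = ∅ := Finset.card_eq_zero.mp (Nat.le_zero.mp this)
            exact absurd this (Finset.nonempty_iff_ne_empty.mp hne)
          rw [hct]
          simp [hc0]
      rw [Finset.sum_congr rfl (fun S _ => hz S)]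
      simp
    -- main case d ≥ 1
    set H : Polynomial ℝ := ∑ S : Finset (Fin n),
        Polynomial.C (ct S * ((pS S : ℝ) - (nS S : ℝ))) * Polynomial.X ^ (S.card - 1) with hH
    have hct_ne : ∀ S : Finset (Fin n), ct S ≠ 0 → c S ≠ 0 := by
      intro S h hc
      apply h
      rw [hct]; simp [hc]
    have hHdeg : H.natDegree < d := by
      have hle : H.natDegree ≤ d - 1 := by
        rw [hH]
        apply Polynomial.natDegree_sum_le_of_forall_le
        intro S _
        by_cases hcS : ct S = 0
        · simp [hcS]
        · refine le_trans (Polynomial.natDegree_C_mul_le _ _) ?_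
          rw [Polynomial.natDegree_X_pow]
          have := hdeg S (hct_ne S hcS)
          omega
      omega
    have hHeval1 : H.eval 1 = ∑ S : Finset (Fin n), ct S * ((pS S : ℝ) - (nS S : ℝ)) := by
      rw [hH, Polynomial.eval_finset_sum]
      apply Finset.sum_congr rfl
      intro S _
      simp
    have hMα : ∀ α : ℝ, |Real.sin α * H.eval (Real.cos α)| ≤ (d:ℝ) := by
      intro α
      set φ : ℝ → ℝ := fun θ => ∑ S : Finset (Fin n),
          ct S * ((Real.cos (α + θ))^(pS S) * (Real.cos (α - θ))^(nS S)) with hφ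
      have htrig : IsTrig d φ := by
        apply isTrig_sum
        intro S _
        by_cases hcS : ct S = 0
        · have hz : (fun θ => ct S * ((Real.cos (α + θ))^(pS S) * (Real.cos (α - θ))^(nS S)))
              = (fun _ : ℝ => (0:ℝ)) := by
            funext θ; rw [hcS]; ring
          rw [hz]
          exact isTrig_const d 0
        · have hcard : pS S + nS S ≤ d := by
            rw [hpn S]; exact hdeg S (hct_ne S hcS)
          have h1 := isTrig_pow (isTrig_cos_add α) (pS S)
          have h2 := isTrig_pow (isTrig_cos_sub α) (nS S)
          have h3 := isTrig_mul h1 h2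
          have h4 := isTrig_mul (isTrig_const 0 (ct S)) h3
          exact isTrig_mono h4 (by omega)
      have hbφ : ∀ θ : ℝ, |φ θ| ≤ 1 := by
        intro θ
        set z : Fin n → ℝ := fun i => (toPM x i) *
            (if 0 ≤ D i then Real.cos (α + θ) else Real.cos (α - θ)) with hz
        have hzb : ∀ i, |z i| ≤ 1 := by
          intro i
          rw [hz]
          simp only []
          rw [abs_mul]
          have h1 : |toPM x i| = 1 := by
            unfold toPM
            cases hxi : x i <;> simp
          rw [h1, one_mul]
          by_cases h : 0 ≤ D i
          · rw [if_pos h]; exact Real.abs_cos_le_one _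
          · rw [if_neg h]; exact Real.abs_cos_le_one _
        have hφz : φ θ = evalR c z := by
          rw [hφ]
          unfold evalR
          apply Finset.sum_congr rfl
          intro S _
          rw [hct]
          have hprod : ∏ i ∈ S, z i = char S x *
              ((Real.cos (α + θ))^(pS S) * (Real.cos (α - θ))^(nS S)) := by
            rw [hz]
            rw [Finset.prod_mul_distrib]
            have hA : (∏ i ∈ S, toPM x i) = char S x := by
              unfold char toPM; rfl
            have hB : (∏ i ∈ S, (if 0 ≤ D i then Real.cos (α + θ) else Real.cos (α - θ)))
                = (Real.cos (α + θ))^(pS S) * (Real.cos (α - θ))^(nS S) := by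
              rw [Finset.prod_ite]
              rw [Finset.prod_const, Finset.prod_const]
            rw [hA, hB]
          rw [hprod]
          ring
        rw [hφz]
        exact evalR_bounded c hbd z hzb
      -- derivative computation
      have hca : HasDerivAt (fun θ : ℝ => α + θ) 1 0 := by
        simpa using (hasDerivAt_id (0:ℝ)).const_add α
      have hcb : HasDerivAt (fun θ : ℝ => α - θ) (-1) 0 := by
        simpa using (hasDerivAt_id (0:ℝ)).const_sub α
      have h1 : HasDerivAt (fun θ : ℝ => Real.cos (α + θ)) (-Real.sin α) 0 := by
        have := (Real.hasDerivAt_cos (α + 0)).comp 0 hca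
        simpa [Function.comp_def] using this
      have h2 : HasDerivAt (fun θ : ℝ => Real.cos (α - θ)) (Real.sin α) 0 := by
        have := (Real.hasDerivAt_cos (α - 0)).comp 0 hcb
        simpa [Function.comp_def] using this
      have hterm : ∀ S : Finset (Fin n), HasDerivAt
          (fun θ => ct S * ((Real.cos (α + θ))^(pS S) * (Real.cos (α - θ))^(nS S)))
          (ct S * (((pS S : ℝ) * Real.cos α ^ (pS S - 1) * (-Real.sin α)) * Real.cos α ^ (nS S)
            + Real.cos α ^ (pS S) * ((nS S : ℝ) * Real.cos α ^ (nS S - 1) * Real.sin α))) 0 := by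
        intro S
        have h3 := ((h1.pow (pS S)).mul (h2.pow (nS S))).const_mul (ct S)
        simpa using h3
      have hsd : HasDerivAt φ (∑ S : Finset (Fin n),
          (ct S * (((pS S : ℝ) * Real.cos α ^ (pS S - 1) * (-Real.sin α)) * Real.cos α ^ (nS S)
            + Real.cos α ^ (pS S) * ((nS S : ℝ) * Real.cos α ^ (nS S - 1) * Real.sin α)))) 0 := by
        rw [hφ]
        exact HasDerivAt.fun_sum (fun S _ => hterm S)
      have heq : (∑ S : Finset (Fin n),
          (ct S * (((pS S : ℝ) * Real.cos α ^ (pS S - 1) * (-Real.sin α)) * Real.cos α ^ (nS S)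
            + Real.cos α ^ (pS S) * ((nS S : ℝ) * Real.cos α ^ (nS S - 1) * Real.sin α))))
          = -(Real.sin α * H.eval (Real.cos α)) := by
        rw [hH, Polynomial.eval_finset_sum, Finset.mul_sum, ← Finset.sum_neg_distrib]
        apply Finset.sum_congr rfl
        intro S _
        simp only [Polynomial.eval_mul, Polynomial.eval_C, Polynomial.eval_pow, Polynomial.eval_X]
        have hcard : S.card = pS S + nS S := (hpn S).symm
        rw [hcard]
        generalize pS S = a
        generalize nS S = b
        rcases Nat.eq_zero_or_pos a with ha | ha
        · rcases Nat.eq_zero_or_pos b with hb | hb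
          · subst ha; subst hb; norm_num
          · obtain ⟨b', rfl⟩ : ∃ b', b = b' + 1 := ⟨b - 1, by omega⟩
            subst ha
            simp only [Nat.zero_sub, Nat.add_sub_cancel, Nat.zero_add, Nat.add_zero, pow_zero]
            push_cast
            ring
        · obtain ⟨a', rfl⟩ : ∃ a', a = a' + 1 := ⟨a - 1, by omega⟩
          rcases Nat.eq_zero_or_pos b with hb | hb
          · subst hb
            simp only [Nat.zero_sub, Nat.add_sub_cancel, Nat.zero_add, Nat.add_zero, pow_zero]
            push_cast
            ring
          · obtain ⟨b', rfl⟩ : ∃ b', b = b' + 1 := ⟨b - 1, by omega⟩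
            have e1 : a' + 1 - 1 = a' := by omega
            have e3 : a' + 1 + (b' + 1) - 1 = a' + b' + 1 := by omega
            rw [e1, e3]
            simp only [Nat.add_sub_cancel]
            push_cast
            ring
      have hD2 := isTrig_deriv_bound htrig hbφ (heq ▸ hsd)
      rw [abs_neg] at hD2
      exact hD2
    have hkey := keyL hd1 H hHdeg hMα
    calc ∑ S : Finset (Fin n), ct S * ((pS S : ℝ) - (nS S : ℝ))
        = H.eval 1 := hHeval1.symm
      _ ≤ |H.eval 1| := le_abs_self _
      _ ≤ (d:ℝ) * (d:ℝ) := hkey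
      _ = (d:ℝ)^2 := by ring
  refine ⟨main, ?_⟩
  -- expectation part
  have hswap : (∑ i : Fin n, Ex (fun x => |eval' c x - eval' c (flipAt x i)| / 2))
      = (∑ x : Fin n → Bool, ∑ i : Fin n, |eval' c x - eval' c (flipAt x i)| / 2) / 2^n := by
    unfold Ex
    rw [← Finset.sum_div]
    rw [Finset.sum_comm]
  rw [hswap]
  rw [div_le_iff₀ (by positivity : (0:ℝ) < 2^n)]
  calc (∑ x : Fin n → Bool, ∑ i : Fin n, |eval' c x - eval' c (flipAt x i)| / 2)
      ≤ ∑ _x : Fin n → Bool, (d:ℝ)^2 := Finset.sum_le_sum (fun x _ => main x)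
    _ = (Fintype.card (Fin n → Bool)) * (d:ℝ)^2 := by
        rw [Finset.sum_const, Finset.card_univ, nsmul_eq_mul]
    _ = (d:ℝ)^2 * 2^n := by
        rw [Fintype.card_fun]
        simp [Fintype.card_fin]
        ring
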